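/- Let g ∈ SO(n) and γ = g⁻¹ eₙ. For i, j ∈ {1,…,n}, the vector fields on SO(n) defined by Y_i(g) = γ(g) ∧ e_i (in the left trivialization T_g SO(n) ≅ 𝔰𝔬(n)) satisfy the Lie bracket identity [Y_i, Y_j] = e_i ∧ e_j (a constant, i.e. left-invariant, vector field). -/

import Mathlib

open Matrix BigOperators

noncomputable section

/-- `u ∧ v := u vᵀ − v uᵀ ∈ 𝔰𝔬(N)`. -/
def wedgeVec {N : ℕ} (u v : Fin N → ℝ) : Matrix (Fin N) (Fin N) ℝ :=
  Matrix.of fun i j => u i * v j - v i * u j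

/-- The Lie bracket of vector fields on `SO(N)` in the left trivialization
`T_g SO(N) ≅ 𝔰𝔬(N)`:
`[Y,Z](g) = dZ_g(gY(g)) − dY_g(gZ(g)) + [Y(g),Z(g)]`, where directional
derivatives are computed entrywise along the curves `t ↦ g exp(t Y(g))`. -/
def bracketLT {N : ℕ}
    (Y Z : Matrix (Fin N) (Fin N) ℝ → Matrix (Fin N) (Fin N) ℝ)
    (g : Matrix (Fin N) (Fin N) ℝ) : Matrix (Fin N) (Fin N) ℝ :=
  Matrix.of fun k l =>
    deriv (fun t : ℝ => Z (g * NormedSpace.exp (t • Y g)) k l) 0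
      - deriv (fun t : ℝ => Y (g * NormedSpace.exp (t • Z g)) k l) 0
      + (Y g * Z g - Z g * Y g) k l


section aux
attribute [local instance] Matrix.linftyOpNormedAddCommGroup Matrix.linftyOpNormedRing Matrix.linftyOpNormedAlgebra

lemma hasDerivAt_exp_entry {N : ℕ} (A : Matrix (Fin N) (Fin N) ℝ) (k l : Fin N) :
    HasDerivAt (fun t : ℝ => NormedSpace.exp (t • A) k l) (A k l) 0 := by
  have h : HasDerivAt (fun t : ℝ => NormedSpace.exp (t • A)) A 0 := by
    have h0 := hasDerivAt_exp_smul_const (𝕂 := ℝ) A (0 : ℝ)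
    simp only [zero_smul, NormedSpace.exp_zero, one_mul] at h0
    exact h0
  let L : Matrix (Fin N) (Fin N) ℝ →ₗ[ℝ] ℝ :=
    (LinearMap.proj l).comp ((LinearMap.proj k).comp (Matrix.ofLinearEquiv ℝ).symm.toLinearMap)
  have := (LinearMap.toContinuousLinearMap L).hasFDerivAt.comp_hasDerivAt (0 : ℝ) h
  simp only [L] at this
  exact this
end aux

lemma hasDerivAt_mul_exp_entry {N : ℕ} (g A : Matrix (Fin N) (Fin N) ℝ) (k l : Fin N) :
    HasDerivAt (fun t : ℝ => (g * NormedSpace.exp (t • A)) k l) ((g * A) k l) 0 := by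
  simp only [Matrix.mul_apply]
  exact HasDerivAt.fun_sum fun p _ => (hasDerivAt_exp_entry A p l).const_mul (g k p)

lemma deriv_wedge_entry {N : ℕ} (g A : Matrix (Fin N) (Fin N) ℝ) (L a k l : Fin N) :
    deriv (fun t : ℝ =>
      wedgeVec (fun m => (g * NormedSpace.exp (t • A)) L m) (Pi.single a 1) k l) 0
      = (g * A) L k * (Pi.single a 1 : Fin N → ℝ) l
        - (Pi.single a 1 : Fin N → ℝ) k * (g * A) L l := by
  refine HasDerivAt.deriv ?_
  simp only [wedgeVec, Matrix.of_apply]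
  exact ((hasDerivAt_mul_exp_entry g A L k).mul_const _).sub
    ((hasDerivAt_mul_exp_entry g A L l).const_mul _)

/-- For `g ∈ SO(n+1)` and `γ = g⁻¹ e_last`, the vector fields
`Y_i(g) = γ(g) ∧ e_i` satisfy `[Y_i, Y_j] = e_i ∧ e_j`. -/
theorem stmt17 {n : ℕ} (i j : Fin (n + 1))
    (g : Matrix (Fin (n + 1)) (Fin (n + 1)) ℝ)
    (hO : g * g.transpose = 1) (hdet : g.det = 1) :
    bracketLT
        (fun h => wedgeVec (fun m => h (Fin.last n) m) (Pi.single i 1))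
        (fun h => wedgeVec (fun m => h (Fin.last n) m) (Pi.single j 1)) g =
      wedgeVec (Pi.single i 1) (Pi.single j 1) := by
  have h1 : ∑ p, g (Fin.last n) p * g (Fin.last n) p = 1 := by
    have := congrFun (congrFun hO (Fin.last n)) (Fin.last n)
    simpa [Matrix.mul_apply, Matrix.transpose_apply] using this
  ext k l
  simp only [bracketLT, Matrix.of_apply, deriv_wedge_entry]
  simp only [wedgeVec, Matrix.mul_apply, Matrix.sub_apply, Matrix.of_apply, Pi.single_apply]
  simp only [sub_mul, mul_sub, ite_mul, mul_ite, one_mul, mul_one, zero_mul, mul_zero,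
    Finset.sum_sub_distrib, Finset.sum_ite_irrel, Finset.sum_ite_eq, Finset.sum_ite_eq',
    Finset.mem_univ, if_true, Finset.sum_const_zero, h1]
  split_ifs <;> subst_vars <;> ring_nf <;> simp_all
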